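/- The conjectured arithmetic intrinsic prior π^A(θ) = -e^{θ-θ₀} log(1 - e^{θ₀-θ}) - 1 for θ > θ₀ is a probability density: it is positive, decreasing, unbounded near θ₀, and ∫_{θ₀}^∞ π^A(θ) dθ = 1. -/

import Mathlib

open Real MeasureTheory Set Filter Topology

lemma key1 {u : ℝ} (h0 : 0 < u) (h1 : u < 1) : Real.log (1 - u) < -u := by
  have h := Real.log_lt_sub_one_of_pos (x := 1 - u) (by linarith)
    (by intro h; apply h0.ne'; linarith)
  linarith

lemma key2 {u : ℝ} (h0 : 0 < u) (h1 : u < 1) : -u / (1 - u) < Real.log (1 - u) := by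
  have hpos : (0:ℝ) < 1 - u := by linarith
  have h := Real.log_lt_sub_one_of_pos (x := (1 - u)⁻¹) (by positivity)
    (by intro h; rw [inv_eq_one] at h; apply h0.ne'; linarith)
  rw [Real.log_inv] at h
  have h2 : (1-u)⁻¹ - 1 = u / (1-u) := by field_simp; ring
  rw [h2] at h
  have h3 : -u/(1-u) = -(u/(1-u)) := neg_div _ _
  linarith

lemma hmul (θ₀ θ : ℝ) : Real.exp (θ - θ₀) * Real.exp (θ₀ - θ) = 1 := by
  rw [← Real.exp_add]; norm_num

lemma hasDerivAt_L (θ₀ θ : ℝ) (h : θ₀ < θ) :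
    HasDerivAt (fun x => Real.log (1 - Real.exp (θ₀ - x)))
      (Real.exp (θ₀ - θ) / (1 - Real.exp (θ₀ - θ))) θ := by
  have hu1 : Real.exp (θ₀ - θ) < 1 := Real.exp_lt_one_iff.mpr (by linarith)
  have hexp : HasDerivAt (fun x => Real.exp (θ₀ - x)) (-Real.exp (θ₀ - θ)) θ := by
    simpa using (((hasDerivAt_id θ).const_sub θ₀).exp)
  have h1exp : HasDerivAt (fun x => 1 - Real.exp (θ₀ - x)) (Real.exp (θ₀ - θ)) θ := by
    simpa using hexp.const_sub 1
  simpa using h1exp.log (by nlinarith)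

lemma hasDerivAt_piA (θ₀ θ : ℝ) (h : θ₀ < θ) :
    HasDerivAt (fun x => -Real.exp (x - θ₀) * Real.log (1 - Real.exp (θ₀ - x)) - 1)
      (-Real.exp (θ - θ₀) * (Real.log (1 - Real.exp (θ₀ - θ))
        + Real.exp (θ₀ - θ) / (1 - Real.exp (θ₀ - θ)))) θ := by
  have hE : HasDerivAt (fun x => Real.exp (x - θ₀)) (Real.exp (θ - θ₀)) θ := by
    simpa using ((hasDerivAt_id θ).sub_const θ₀).exp
  have := ((hE.neg.mul (hasDerivAt_L θ₀ θ h)).sub_const 1)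
  simp only [Pi.neg_def, Pi.mul_def] at this
  refine this.congr_deriv ?_
  ring

lemma hasDerivAt_F (θ₀ θ : ℝ) (h : θ₀ < θ) :
    HasDerivAt (fun x => -(Real.exp (x - θ₀) - 1) * Real.log (1 - Real.exp (θ₀ - x)))
      (-Real.exp (θ - θ₀) * Real.log (1 - Real.exp (θ₀ - θ)) - 1) θ := by
  have hE : HasDerivAt (fun x => Real.exp (x - θ₀)) (Real.exp (θ - θ₀)) θ := by
    simpa using ((hasDerivAt_id θ).sub_const θ₀).exp
  have hu0 : 0 < Real.exp (θ₀ - θ) := Real.exp_pos _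
  have hu1 : Real.exp (θ₀ - θ) < 1 := Real.exp_lt_one_iff.mpr (by linarith)
  have := (hE.sub_const 1).neg.mul (hasDerivAt_L θ₀ θ h)
  simp only [Pi.neg_def, Pi.mul_def] at this
  refine this.congr_deriv ?_
  have hne : (1 : ℝ) - Real.exp (θ₀ - θ) ≠ 0 := by linarith
  have h2 : (Real.exp (θ - θ₀) - 1) * Real.exp (θ₀ - θ) = 1 - Real.exp (θ₀ - θ) := by
    rw [sub_mul, hmul θ₀ θ, one_mul]
  have h3 : -(Real.exp (θ - θ₀) - 1) * (Real.exp (θ₀ - θ) / (1 - Real.exp (θ₀ - θ)))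
      = -1 := by
    rw [neg_mul, mul_div_assoc', h2, div_self hne]
  rw [h3]; ring

theorem arithmetic_intrinsic_prior_density (θ₀ : ℝ) :
    (∀ θ, θ₀ < θ →
      0 < -Real.exp (θ - θ₀) * Real.log (1 - Real.exp (θ₀ - θ)) - 1) ∧
    StrictAntiOn (fun θ => -Real.exp (θ - θ₀) * Real.log (1 - Real.exp (θ₀ - θ)) - 1)
      (Set.Ioi θ₀) ∧
    Tendsto (fun θ => -Real.exp (θ - θ₀) * Real.log (1 - Real.exp (θ₀ - θ)) - 1)
      (nhdsWithin θ₀ (Set.Ioi θ₀)) atTop ∧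
    (∫ θ in Set.Ioi θ₀,
        (-Real.exp (θ - θ₀) * Real.log (1 - Real.exp (θ₀ - θ)) - 1)) = 1 := by
  -- Part 1: positivity
  have pos : ∀ θ, θ₀ < θ →
      0 < -Real.exp (θ - θ₀) * Real.log (1 - Real.exp (θ₀ - θ)) - 1 := by
    intro θ hθ
    have hu0 : 0 < Real.exp (θ₀ - θ) := Real.exp_pos _
    have hu1 : Real.exp (θ₀ - θ) < 1 := Real.exp_lt_one_iff.mpr (by linarith)
    have hk := key1 hu0 hu1
    have hm := hmul θ₀ θ
    nlinarith [Real.exp_pos (θ - θ₀)]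
  refine ⟨pos, ?_, ?_, ?_⟩
  · -- Part 2: strictly decreasing
    apply strictAntiOn_of_deriv_neg (convex_Ioi θ₀)
    · intro x hx
      exact ((hasDerivAt_piA θ₀ x hx).continuousAt).continuousWithinAt
    · intro x hx
      rw [interior_Ioi] at hx
      rw [(hasDerivAt_piA θ₀ x hx).deriv]
      have hu0 : 0 < Real.exp (θ₀ - x) := Real.exp_pos _
      have hu1 : Real.exp (θ₀ - x) < 1 := Real.exp_lt_one_iff.mpr (by linarith [mem_Ioi.mp hx])
      have hk := key2 hu0 hu1
      have h3 : -Real.exp (θ₀ - x)/(1 - Real.exp (θ₀ - x))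
          = -(Real.exp (θ₀ - x)/(1 - Real.exp (θ₀ - x))) := neg_div _ _
      nlinarith [Real.exp_pos (x - θ₀)]
  · -- Part 3: blows up at θ₀⁺
    have h1 : Tendsto (fun θ => 1 - Real.exp (θ₀ - θ)) (𝓝[>] θ₀) (𝓝[>] 0) := by
      apply tendsto_nhdsWithin_of_tendsto_nhds_of_eventually_within
      · have hc : Continuous fun θ : ℝ => 1 - Real.exp (θ₀ - θ) := by continuity
        have := (hc.tendsto θ₀).mono_left (nhdsWithin_le_nhds (s := Set.Ioi θ₀))
        simpa using this
      · filter_upwards [self_mem_nhdsWithin] with θ hθ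
        have : Real.exp (θ₀ - θ) < 1 := Real.exp_lt_one_iff.mpr (by
          simp only [mem_Ioi] at hθ; linarith)
        simpa using this
    have h2 : Tendsto (fun θ => -Real.log (1 - Real.exp (θ₀ - θ)) - 1) (𝓝[>] θ₀) atTop := by
      apply tendsto_atTop_add_const_right
      exact tendsto_neg_atBot_atTop.comp (Real.tendsto_log_nhdsGT_zero.comp h1)
    apply tendsto_atTop_mono' _ _ h2
    filter_upwards [self_mem_nhdsWithin] with θ hθ
    simp only [mem_Ioi] at hθ
    have hu0 : 0 < Real.exp (θ₀ - θ) := Real.exp_pos _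
    have hu1 : Real.exp (θ₀ - θ) < 1 := Real.exp_lt_one_iff.mpr (by linarith)
    have hL : Real.log (1 - Real.exp (θ₀ - θ)) ≤ 0 :=
      Real.log_nonpos (by linarith) (by linarith)
    have hE : 1 ≤ Real.exp (θ - θ₀) := Real.one_le_exp (by linarith)
    nlinarith
  · -- Part 4: integral equals 1
    have hcont : ContinuousWithinAt
        (fun x => -(Real.exp (x - θ₀) - 1) * Real.log (1 - Real.exp (θ₀ - x)))
        (Set.Ici θ₀) θ₀ := by
      rw [← continuousWithinAt_Ioi_iff_Ici]
      have h1 : Tendsto (fun θ => 1 - Real.exp (θ₀ - θ)) (𝓝[>] θ₀) (𝓝[>] 0) := by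
        apply tendsto_nhdsWithin_of_tendsto_nhds_of_eventually_within
        · have hc : Continuous fun θ : ℝ => 1 - Real.exp (θ₀ - θ) := by continuity
          have := (hc.tendsto θ₀).mono_left (nhdsWithin_le_nhds (s := Set.Ioi θ₀))
          simpa using this
        · filter_upwards [self_mem_nhdsWithin] with θ hθ
          have : Real.exp (θ₀ - θ) < 1 := Real.exp_lt_one_iff.mpr (by
            simp only [mem_Ioi] at hθ; linarith)
          simpa using this
      have hvlv : Tendsto (fun v : ℝ => Real.log v * v) (𝓝[>] 0) (𝓝 0) := by
        have := tendsto_log_mul_rpow_nhdsGT_zero (one_pos)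
        simpa [Real.rpow_one] using this
      have hinv : Tendsto (fun v : ℝ => -(1 - v)⁻¹) (𝓝[>] 0) (𝓝 (-1)) := by
        have hc : ContinuousAt (fun v : ℝ => -(1 - v)⁻¹) 0 := by
          apply ContinuousAt.neg
          apply ContinuousAt.inv₀ (by fun_prop) (by norm_num)
        have := hc.tendsto.mono_left (nhdsWithin_le_nhds (s := Set.Ioi (0:ℝ)))
        simpa using this
      have hG : Tendsto (fun v : ℝ => -(1 - v)⁻¹ * (Real.log v * v)) (𝓝[>] 0) (𝓝 0) := by
        have := hinv.mul hvlv
        simpa using this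
      have hcomp := hG.comp h1
      unfold ContinuousWithinAt
      have hval : (fun x => -(Real.exp (x - θ₀) - 1) * Real.log (1 - Real.exp (θ₀ - x))) θ₀
          = 0 := by simp
      rw [hval]
      apply hcomp.congr'
      filter_upwards [self_mem_nhdsWithin] with θ hθ
      simp only [mem_Ioi] at hθ
      have hu0 : 0 < Real.exp (θ₀ - θ) := Real.exp_pos _
      have hu1 : Real.exp (θ₀ - θ) < 1 := Real.exp_lt_one_iff.mpr (by linarith)
      have hE : Real.exp (θ - θ₀) = (Real.exp (θ₀ - θ))⁻¹ := by
        rw [show θ - θ₀ = -(θ₀ - θ) by ring, Real.exp_neg]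
      simp only [Function.comp_apply]
      rw [hE]
      have h1u : (1 : ℝ) - (1 - Real.exp (θ₀ - θ)) = Real.exp (θ₀ - θ) := by ring
      rw [h1u]
      field_simp
    have hderiv : ∀ x ∈ Set.Ioi θ₀, HasDerivAt
        (fun x => -(Real.exp (x - θ₀) - 1) * Real.log (1 - Real.exp (θ₀ - x)))
        (-Real.exp (x - θ₀) * Real.log (1 - Real.exp (θ₀ - x)) - 1) x :=
      fun x hx => hasDerivAt_F θ₀ x hx
    have hpos : ∀ x ∈ Set.Ioi θ₀,
        0 ≤ -Real.exp (x - θ₀) * Real.log (1 - Real.exp (θ₀ - x)) - 1 :=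
      fun x hx => (pos x hx).le
    have htop : Tendsto (fun x => -(Real.exp (x - θ₀) - 1) * Real.log (1 - Real.exp (θ₀ - x)))
        atTop (𝓝 1) := by
      -- w = exp (θ₀ - θ) → 0⁺
      have h0 : Tendsto (fun θ : ℝ => θ₀ - θ) atTop atBot := by
        have := (tendsto_atTop_add_const_right atTop (-θ₀) tendsto_id)
        have h := tendsto_neg_atTop_atBot.comp this
        apply h.congr
        intro x; simp [Function.comp]; ring
      have hw : Tendsto (fun θ : ℝ => Real.exp (θ₀ - θ)) atTop (𝓝[>] 0) := by
        apply tendsto_nhdsWithin_of_tendsto_nhds_of_eventually_within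
        · exact Real.tendsto_exp_atBot.comp h0
        · exact Eventually.of_forall fun θ => Real.exp_pos _
      -- slope of w ↦ -log(1-w) at 0 is 1
      have hd : HasDerivAt (fun w : ℝ => -Real.log (1 - w)) 1 0 := by
        have := (((hasDerivAt_id (0:ℝ)).const_sub 1).log (by norm_num)).neg
        simpa [Pi.neg_def] using this
      have hslope := hasDerivAt_iff_tendsto_slope.mp hd
      have hslope' : Tendsto (fun w : ℝ => -Real.log (1 - w) / w) (𝓝[>] 0) (𝓝 1) := by
        have hmono : 𝓝[>] (0:ℝ) ≤ 𝓝[≠] (0:ℝ) :=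
          nhdsWithin_mono 0 (fun x hx => ne_of_gt hx)
        have := hslope.mono_left hmono
        apply this.congr'
        filter_upwards [self_mem_nhdsWithin] with w hw'
        simp only [mem_Ioi] at hw'
        rw [slope_def_field]
        simp
      have hlog0 : Tendsto (fun w : ℝ => Real.log (1 - w)) (𝓝[>] 0) (𝓝 0) := by
        have hc : ContinuousAt (fun w : ℝ => Real.log (1 - w)) 0 := by
          apply ContinuousAt.comp (x := (0:ℝ)) (g := Real.log)
          · simp only [sub_zero]
            exact Real.continuousAt_log (by norm_num)
          · fun_prop
        have := hc.tendsto.mono_left (nhdsWithin_le_nhds (s := Set.Ioi (0:ℝ)))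
        simpa using this
      have hGe : Tendsto (fun w : ℝ => -((w⁻¹ - 1)) * Real.log (1 - w)) (𝓝[>] 0) (𝓝 1) := by
        have hsum := hslope'.add hlog0
        rw [add_zero] at hsum
        apply hsum.congr'
        filter_upwards [self_mem_nhdsWithin] with w hw'
        simp only [mem_Ioi] at hw'
        field_simp
        ring
      have := hGe.comp hw
      apply this.congr
      intro θ
      simp only [Function.comp_apply]
      have hE : Real.exp (θ - θ₀) = (Real.exp (θ₀ - θ))⁻¹ := by
        rw [show θ - θ₀ = -(θ₀ - θ) by ring, Real.exp_neg]
      rw [hE]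
    have key := integral_Ioi_of_hasDerivAt_of_nonneg hcont hderiv hpos htop
    rw [key]
    simp
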